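/- (Window formula for the consensus error, derived in the proof of Lemma 3.2.) Let α ∈ ℝ, τ ≥ 1, n ≥ 1, d ≥ 1, and for each i ∈ ℕ let W^{(i)} ∈ ℝ^{n×n} satisfy W^{(i)}·1 = 1 and (W^{(i)})ᵀ·1 = 1, with W^{(i)} = J := (1/n)·1·1ᵀ whenever τ divides i+1. Let G^{(j)} ∈ ℝ^{n×d} (rows indexed by agents, with G^{(−1)} := 0) and let X^{(k)}, g^{(k)} ∈ ℝ^{n×d} satisfy X^{(k+1)} = W^{(k)}(X^{(k)} − α·g^{(k)}), g^{(k+1)} = W^{(k)} g^{(k)} + G^{(k+1)} − G^{(k)}, g^{(0)} = G^{(0)}. Write Ŵ^{(i)} := W^{(i)} − J and X̂^{(k)} := (I − J)·X^{(k)}. Then for every k with k − 1 ≥ τ: X̂^{(k)} = −α·Σ_{j=k−τ}^{k−1} (k−j)·(Ŵ^{(k−1)}·Ŵ^{(k−2)}·⋯·Ŵ^{(j)})·(G^{(j)} − G^{(j−1)}). -/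

import Mathlib

open Matrix

noncomputable section

/-- The averaging matrix `J = (1/n) 1 1ᵀ`, with all entries equal to `1/n`. -/
def avgMat (n : ℕ) : Matrix (Fin n) (Fin n) ℝ := Matrix.of fun _ _ => (n : ℝ)⁻¹

/-- The ordered matrix product `M^{(a)} M^{(a-1)} ⋯ M^{(b)}` (larger indices on the left);
for `a < b` it is the empty product `1`. -/
def prodDesc {n : ℕ} (M : ℕ → Matrix (Fin n) (Fin n) ℝ) (a b : ℕ) :
    Matrix (Fin n) (Fin n) ℝ :=
  ((List.range (a + 1 - b)).map (fun t => M (a - t))).prod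

namespace ConsensusAux

variable {n d : ℕ}

/-- `Pf Wh k j = Wh (k-1) * Wh (k-2) * ⋯ * Wh j`, the empty product `1` if `j ≥ k`. -/
def Pf (Wh : ℕ → Matrix (Fin n) (Fin n) ℝ) (k j : ℕ) : Matrix (Fin n) (Fin n) ℝ :=
  ((List.range (k - j)).map (fun t => Wh (k - 1 - t))).prod

lemma Pf_self (Wh : ℕ → Matrix (Fin n) (Fin n) ℝ) (k : ℕ) : Pf Wh k k = 1 := by simp [Pf]

lemma Pf_single (Wh : ℕ → Matrix (Fin n) (Fin n) ℝ) (j : ℕ) : Pf Wh (j+1) j = Wh j := by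
  simp [Pf, List.range_succ]

lemma Pf_succ_left (Wh : ℕ → Matrix (Fin n) (Fin n) ℝ) {k j : ℕ} (h : j ≤ k) :
    Pf Wh (k+1) j = Wh k * Pf Wh k j := by
  have h1 : k + 1 - j = (k - j) + 1 := by omega
  have h2 : ((fun t => Wh (k + 1 - 1 - t)) ∘ Nat.succ) = fun t => Wh (k - 1 - t) := by
    funext t
    simp only [Function.comp_apply]
    exact congrArg Wh (by omega)
  rw [Pf, h1, List.range_succ_eq_map, List.map_cons, List.map_map, List.prod_cons, h2]
  have h3 : k + 1 - 1 - 0 = k := by omega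
  rw [h3]; rfl

lemma Pf_comp (Wh : ℕ → Matrix (Fin n) (Fin n) ℝ) {j t k : ℕ} (hjt : j ≤ t) (htk : t ≤ k) :
    Pf Wh k t * Pf Wh t j = Pf Wh k j := by
  have h : k - j = (k - t) + (t - j) := by omega
  rw [Pf, Pf, Pf, h, List.range_add, List.map_append, List.prod_append]
  congr 2
  rw [List.map_map]
  apply List.map_congr_left
  intro t' ht'
  rw [List.mem_range] at ht'
  simp only [Function.comp_apply]
  exact congrArg Wh (by omega)

lemma Pf_split_right (Wh : ℕ → Matrix (Fin n) (Fin n) ℝ) {k j : ℕ} (h : j < k) :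
    Pf Wh k j = Pf Wh k (j+1) * Wh j := by
  rw [← Pf_single Wh j, Pf_comp Wh (Nat.le_succ j) h]

lemma Pf_eq_zero (Wh : ℕ → Matrix (Fin n) (Fin n) ℝ) {k j i : ℕ}
    (hji : j ≤ i) (hik : i < k) (hz : Wh i = 0) : Pf Wh k j = 0 := by
  apply List.prod_eq_zero
  rw [List.mem_map]
  exact ⟨k - 1 - i, by rw [List.mem_range]; omega, by rw [show k - 1 - (k - 1 - i) = i by omega, hz]⟩

lemma Pf_window_zero (Wh : ℕ → Matrix (Fin n) (Fin n) ℝ) {τ k j : ℕ} (hτ : 1 ≤ τ)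
    (h : τ ≤ k - j) (hJ : ∀ i, τ ∣ i + 1 → Wh i = 0) : Pf Wh k j = 0 := by
  have hmod : j % τ < τ := Nat.mod_lt _ hτ
  have hdm : τ * (j / τ) + j % τ = j := Nat.div_add_mod j τ
  refine Pf_eq_zero Wh (i := j + (τ - 1 - j % τ)) (by omega) (by omega) ?_
  refine hJ _ ⟨j / τ + 1, ?_⟩
  have h2 : τ * (j / τ + 1) = τ * (j / τ) + τ := Nat.mul_succ _ _
  omega

lemma Pf_eq_prodDesc (Wh : ℕ → Matrix (Fin n) (Fin n) ℝ) {k : ℕ} (hk : 1 ≤ k) (j : ℕ) :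
    prodDesc Wh (k - 1) j = Pf Wh k j := by
  rw [prodDesc, Pf, show k - 1 + 1 - j = k - j from by omega]

lemma mul_avg {W : Matrix (Fin n) (Fin n) ℝ}
    (hrow : W *ᵥ (fun _ => (1 : ℝ)) = fun _ => 1) : W * avgMat n = avgMat n := by
  ext a b
  have h := congrFun hrow a
  simp only [Matrix.mulVec, dotProduct, mul_one] at h
  simp only [Matrix.mul_apply, avgMat, Matrix.of_apply]
  rw [← Finset.sum_mul, h, one_mul]

lemma avg_mul {W : Matrix (Fin n) (Fin n) ℝ}
    (hcol : (fun _ => (1 : ℝ)) ᵥ* W = fun _ => 1) : avgMat n * W = avgMat n := by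
  ext a b
  have h := congrFun hcol b
  simp only [Matrix.vecMul, dotProduct, one_mul] at h
  simp only [Matrix.mul_apply, avgMat, Matrix.of_apply]
  rw [← Finset.mul_sum, h, mul_one]

lemma avg_mul_avg (hn : 1 ≤ n) : avgMat n * avgMat n = avgMat n := by
  ext a b
  simp only [Matrix.mul_apply, avgMat, Matrix.of_apply]
  rw [Finset.sum_const, Finset.card_univ, Fintype.card_fin, nsmul_eq_mul]
  have : (n : ℝ) ≠ 0 := by positivity
  field_simp

lemma one_sub_avg_mul {W : Matrix (Fin n) (Fin n) ℝ}
    (hcol : (fun _ => (1 : ℝ)) ᵥ* W = fun _ => 1) :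
    (1 - avgMat n) * W = W - avgMat n := by
  rw [sub_mul, one_mul, avg_mul hcol]

lemma absorb (hn : 1 ≤ n) {W : Matrix (Fin n) (Fin n) ℝ}
    (hrow : W *ᵥ (fun _ => (1 : ℝ)) = fun _ => 1) (M : Matrix (Fin n) (Fin d) ℝ) :
    (W - avgMat n) * ((1 - avgMat n) * M) = (W - avgMat n) * M := by
  have hz : (W - avgMat n) * avgMat n = 0 := by
    rw [sub_mul, mul_avg hrow, avg_mul_avg hn, sub_self]
  have hin : (1 - avgMat n) * M = M - avgMat n * M := by
    rw [Matrix.sub_mul, Matrix.one_mul]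
  rw [hin, Matrix.mul_sub, ← Matrix.mul_assoc, hz, Matrix.zero_mul, sub_zero]

lemma Pf_absorb (hn : 1 ≤ n)
    (W Wh : ℕ → Matrix (Fin n) (Fin n) ℝ) (hWh : ∀ i, Wh i = W i - avgMat n)
    (hrow : ∀ i, W i *ᵥ (fun _ => (1 : ℝ)) = fun _ => 1)
    {k j : ℕ} (h : j < k) (M : Matrix (Fin n) (Fin d) ℝ) :
    Pf Wh k j * ((1 - avgMat n) * M) = Pf Wh k j * M := by
  rw [Pf_split_right Wh h, Matrix.mul_assoc, Matrix.mul_assoc]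
  congr 1
  rw [hWh j, absorb hn (hrow j)]

lemma ghat_formula (hn : 1 ≤ n)
    (W Wh : ℕ → Matrix (Fin n) (Fin n) ℝ) (hWh : ∀ i, Wh i = W i - avgMat n)
    (hrow : ∀ i, W i *ᵥ (fun _ => (1 : ℝ)) = fun _ => 1)
    (hcol : ∀ i, (fun _ => (1 : ℝ)) ᵥ* W i = fun _ => 1)
    (G : ℤ → Matrix (Fin n) (Fin d) ℝ) (hGm1 : G (-1) = 0)
    (g : ℕ → Matrix (Fin n) (Fin d) ℝ)
    (hg : ∀ k, g (k + 1) = W k * g k + G ((k : ℤ) + 1) - G (k : ℤ))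
    (hg0 : g 0 = G 0) :
    ∀ k, (1 - avgMat n) * g k
      = ∑ j ∈ Finset.range (k+1),
          Pf Wh k j * ((1 - avgMat n) * (G (j : ℤ) - G ((j : ℤ) - 1))) := by
  intro k
  induction k with
  | zero => simp [hg0, Pf_self, hGm1]
  | succ k ih =>
      rw [hg k, Finset.sum_range_succ]
      have hstep : (1 - avgMat n) * (W k * g k + G ((k:ℤ)+1) - G (k:ℤ))
          = Wh k * ((1 - avgMat n) * g k)
            + (1 - avgMat n) * (G ((k:ℤ)+1) - G (k:ℤ)) := by
        rw [add_sub_assoc, Matrix.mul_add, ← Matrix.mul_assoc, one_sub_avg_mul (hcol k),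
          ← hWh k, hWh k, absorb hn (hrow k), ← hWh k]
      rw [hstep, ih, Matrix.mul_sum]
      congr 1
      · apply Finset.sum_congr rfl
        intro j hj
        rw [Finset.mem_range] at hj
        rw [← Matrix.mul_assoc, ← Pf_succ_left Wh (by omega : j ≤ k)]
      · have e1 : ((k+1:ℕ):ℤ) = (k:ℤ)+1 := by push_cast; ring
        rw [Pf_self, Matrix.one_mul, e1, add_sub_cancel_right]

lemma Xhat_unroll (hn : 1 ≤ n) (α : ℝ)
    (W Wh : ℕ → Matrix (Fin n) (Fin n) ℝ) (hWh : ∀ i, Wh i = W i - avgMat n)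
    (hrow : ∀ i, W i *ᵥ (fun _ => (1 : ℝ)) = fun _ => 1)
    (hcol : ∀ i, (fun _ => (1 : ℝ)) ᵥ* W i = fun _ => 1)
    (X g : ℕ → Matrix (Fin n) (Fin d) ℝ)
    (hX : ∀ k, X (k + 1) = W k * (X k - α • g k)) :
    ∀ m k, m ≤ k → (1 - avgMat n) * X k
      = Pf Wh k m * ((1 - avgMat n) * X m)
        - α • ∑ t ∈ Finset.Ico m k, Pf Wh k t * ((1 - avgMat n) * g t) := by
  intro m k hmk
  induction k, hmk using Nat.le_induction with
  | base => simp [Pf_self]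
  | succ k hmk ih =>
      have hstep : (1 - avgMat n) * X (k+1)
          = Wh k * ((1 - avgMat n) * X k)
            - α • (Wh k * ((1 - avgMat n) * g k)) := by
        rw [hX k, ← Matrix.mul_assoc, one_sub_avg_mul (hcol k), ← hWh k, Matrix.mul_sub,
          Matrix.mul_smul, hWh k, absorb hn (hrow k), absorb hn (hrow k), ← hWh k]
      rw [hstep, ih, Matrix.mul_sub, Matrix.mul_smul, Matrix.mul_sum, ← Matrix.mul_assoc,
        ← Pf_succ_left Wh hmk]
      have hsum : ∀ t ∈ Finset.Ico m k,
          Wh k * (Pf Wh k t * ((1 - avgMat n) * g t))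
            = Pf Wh (k+1) t * ((1 - avgMat n) * g t) := by
        intro t ht
        rw [Finset.mem_Ico] at ht
        rw [← Matrix.mul_assoc, ← Pf_succ_left Wh (by omega : t ≤ k)]
      rw [Finset.sum_congr rfl hsum, Finset.sum_Ico_succ_top hmk, Pf_single, smul_add, sub_sub]

end ConsensusAux

/-- **Window formula for the consensus error (from the proof of Lemma 3.2).**
Under the GT-PGA recursion with doubly stochastic mixing matrices `W^{(i)}` satisfying
`W^{(i)} = J` whenever `τ ∣ i + 1`, writing `Ŵ^{(i)} = W^{(i)} - J` and
`X̂^{(k)} = (I - J) X^{(k)}`, for every `k` with `k - 1 ≥ τ`: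
`X̂^{(k)} = -α ∑_{j=k-τ}^{k-1} (k-j) (Ŵ^{(k-1)} ⋯ Ŵ^{(j)}) (G^{(j)} - G^{(j-1)})`. -/
theorem consensus_error_window_formula (n d τ : ℕ) (hn : 1 ≤ n) (hd : 1 ≤ d) (hτ : 1 ≤ τ)
    (α : ℝ) (W : ℕ → Matrix (Fin n) (Fin n) ℝ)
    (hrow : ∀ i, W i *ᵥ (fun _ => (1 : ℝ)) = fun _ => 1)
    (hcol : ∀ i, (fun _ => (1 : ℝ)) ᵥ* W i = fun _ => 1)
    (hJ : ∀ i, τ ∣ (i + 1) → W i = avgMat n)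
    (G : ℤ → Matrix (Fin n) (Fin d) ℝ) (hGm1 : G (-1) = 0)
    (X g : ℕ → Matrix (Fin n) (Fin d) ℝ)
    (hX : ∀ k, X (k + 1) = W k * (X k - α • g k))
    (hg : ∀ k, g (k + 1) = W k * g k + G ((k : ℤ) + 1) - G (k : ℤ))
    (hg0 : g 0 = G 0) :
    ∀ k : ℕ, τ ≤ k - 1 →
      (1 - avgMat n) * X k
        = -(α • ∑ j ∈ Finset.Icc (k - τ) (k - 1),
            ((k : ℝ) - (j : ℝ)) •
              (prodDesc (fun i => W i - avgMat n) (k - 1) j * (G (j : ℤ) - G ((j : ℤ) - 1)))) := by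
  classical
  intro k hk
  set Wh : ℕ → Matrix (Fin n) (Fin n) ℝ := fun i => W i - avgMat n with hWhdef
  have hWh : ∀ i, Wh i = W i - avgMat n := fun i => rfl
  have hk1 : τ + 1 ≤ k := by omega
  have hWhz : ∀ i, τ ∣ i + 1 → Wh i = 0 := fun i hi => by
    rw [hWh, hJ i hi, sub_self]
  -- unroll the recursion over the window
  have step1 := ConsensusAux.Xhat_unroll hn α W Wh hWh hrow hcol X g hX (k - τ - 1) k (by omega)
  have hPf0 : ConsensusAux.Pf Wh k (k - τ - 1) = 0 :=
    ConsensusAux.Pf_window_zero Wh hτ (by omega) hWhz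
  rw [hPf0, Matrix.zero_mul, zero_sub] at step1
  -- substitute the formula for the projected tracking variable
  have hterm : ∀ t ∈ Finset.Ico (k - τ - 1) k,
      ConsensusAux.Pf Wh k t * ((1 - avgMat n) * g t)
        = ∑ j ∈ Finset.Ico (k - τ) (t + 1),
            ConsensusAux.Pf Wh k j * ((1 - avgMat n) * (G (j : ℤ) - G ((j : ℤ) - 1))) := by
    intro t ht
    rw [Finset.mem_Ico] at ht
    rw [ConsensusAux.ghat_formula hn W Wh hWh hrow hcol G hGm1 g hg hg0 t, Matrix.mul_sum]
    have hcomp : ∀ j ∈ Finset.range (t + 1),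
        ConsensusAux.Pf Wh k t
            * (ConsensusAux.Pf Wh t j * ((1 - avgMat n) * (G (j : ℤ) - G ((j : ℤ) - 1))))
          = ConsensusAux.Pf Wh k j * ((1 - avgMat n) * (G (j : ℤ) - G ((j : ℤ) - 1))) := by
      intro j hj
      rw [Finset.mem_range] at hj
      rw [← Matrix.mul_assoc, ConsensusAux.Pf_comp Wh (by omega : j ≤ t) (by omega : t ≤ k)]
    rw [Finset.sum_congr rfl hcomp]
    refine (Finset.sum_subset ?_ ?_).symm
    · intro j hj
      rw [Finset.mem_Ico] at hj
      rw [Finset.mem_range]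
      omega
    · intro j hj hj'
      rw [Finset.mem_range] at hj
      rw [Finset.mem_Ico] at hj'
      have hz : ConsensusAux.Pf Wh k j = 0 :=
        ConsensusAux.Pf_window_zero Wh hτ (by omega) hWhz
      rw [hz, Matrix.zero_mul]
  rw [Finset.sum_congr rfl hterm] at step1
  -- drop the empty first window
  have hdrop : ∑ t ∈ Finset.Ico (k - τ - 1) k, ∑ j ∈ Finset.Ico (k - τ) (t + 1),
        ConsensusAux.Pf Wh k j * ((1 - avgMat n) * (G (j : ℤ) - G ((j : ℤ) - 1)))
      = ∑ t ∈ Finset.Ico (k - τ) k, ∑ j ∈ Finset.Ico (k - τ) (t + 1),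
        ConsensusAux.Pf Wh k j * ((1 - avgMat n) * (G (j : ℤ) - G ((j : ℤ) - 1))) := by
    refine (Finset.sum_subset ?_ ?_).symm
    · intro t htm
      rw [Finset.mem_Ico] at htm ⊢
      omega
    · intro t htm htm'
      rw [Finset.mem_Ico] at htm htm'
      rw [Finset.Ico_eq_empty (by omega : ¬ k - τ < t + 1), Finset.sum_empty]
  rw [hdrop, ← Finset.sum_Ico_Ico_comm] at step1
  -- count the multiplicities
  have hcount : ∀ j ∈ Finset.Ico (k - τ) k,
      ∑ t ∈ Finset.Ico j k,
          ConsensusAux.Pf Wh k j * ((1 - avgMat n) * (G (j : ℤ) - G ((j : ℤ) - 1)))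
        = ((k : ℝ) - (j : ℝ)) •
            (prodDesc Wh (k - 1) j * (G (j : ℤ) - G ((j : ℤ) - 1))) := by
    intro j hj
    rw [Finset.mem_Ico] at hj
    rw [Finset.sum_const, Nat.card_Ico,
      ConsensusAux.Pf_absorb hn W Wh hWh hrow (by omega : j < k),
      ConsensusAux.Pf_eq_prodDesc Wh (by omega : 1 ≤ k) j,
      ← Nat.cast_smul_eq_nsmul ℝ, Nat.cast_sub (by omega : j ≤ k)]
  rw [Finset.sum_congr rfl hcount] at step1
  have hIcc : Finset.Icc (k - τ) (k - 1) = Finset.Ico (k - τ) k := by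
    rw [← Finset.Ico_add_one_right_eq_Icc]
    congr 1
    omega
  rw [step1, hIcc]
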